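/- Lemma 2: Let p be a probability distribution on {0,…,d−1}, let |φ_k⟩^{BSE} be unit vectors, and consider the unit vector |ψ_a⟩^{ACBSE} = ∑_{k=0}^{d−1} √p_k |k⟩^A |k⟩^C |φ_k⟩^{BSE}. For any conjugate basis {|x̃⟩}_{x=0}^{d−1} of the A system, I(X̃^A:CBS) = H(Z^A) − I(Z^A:E), where I(X̃^A:CBS) is the Holevo quantity of the ensemble of conditional states of C⊗B⊗S given the outcome of the conjugate-basis measurement on A, H(Z^A) = −∑_k p_k log₂ p_k, and I(Z^A:E) = S(∑_k p_k φ_k^E) − ∑_k p_k S(φ_k^E) with φ_k^E the reduced state of |φ_k⟩ on E. -/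

import Mathlib

open Matrix Complex BigOperators Finset
open Kronecker
open scoped ComplexOrder

noncomputable section

/-- ρ is a density operator: positive semidefinite with unit trace. -/
def IsDensity {ι : Type*} [Fintype ι] (ρ : Matrix ι ι ℂ) : Prop :=
  ρ.PosSemidef ∧ ρ.trace = 1

/-- A POVM indexed by `μ` on a system with index set `ι`. -/
def IsPOVM {μ ι : Type*} [Fintype μ] [Fintype ι] [DecidableEq ι]
    (Λ : μ → Matrix ι ι ℂ) : Prop :=
  (∀ m, (Λ m).PosSemidef) ∧ ∑ m, Λ m = 1

/-- Projector |k⟩⟨k| onto a standard basis element. -/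
def stdProj {ι : Type*} [DecidableEq ι] (k : ι) : Matrix ι ι ℂ :=
  Matrix.single k k 1

/-- The standard basis vector |k⟩. -/
def stdVec {ι : Type*} [DecidableEq ι] (k : ι) : ι → ℂ :=
  fun i => if i = k then 1 else 0

/-- Trace norm Tr √(MᴴM). -/
def traceNorm {ι : Type*} [Fintype ι] [DecidableEq ι] (M : Matrix ι ι ℂ) : ℝ :=
  (((Matrix.posSemidef_conjTranspose_mul_self M).1.eigenvectorUnitary : Matrix ι ι ℂ) *
    Matrix.diagonal (((↑) : ℝ → ℂ) ∘ Real.sqrt ∘ (Matrix.posSemidef_conjTranspose_mul_self M).1.eigenvalues) *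
    (star (Matrix.posSemidef_conjTranspose_mul_self M).1.eigenvectorUnitary : Matrix ι ι ℂ)).trace.re

def negMulLog2 (x : ℝ) : ℝ := -(x * Real.logb 2 x)

/-- Shannon entropy in bits. -/
def shannon {α : Type*} [Fintype α] (p : α → ℝ) : ℝ := ∑ a, negMulLog2 (p a)

/-- Conditional Shannon entropy (in bits) of the first component given the second. -/
def condEnt {α β : Type*} [Fintype α] [Fintype β] (p : α × β → ℝ) : ℝ :=
  shannon p - shannon (fun b => ∑ a, p (a, b))

/-- Element |x̃⟩ = (1/√d) ∑ₖ e^{iθₓₖ}|k⟩ of a candidate conjugate basis. -/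
def conjVec (d : ℕ) (θ : Fin d → Fin d → ℝ) (x : Fin d) : Fin d → ℂ :=
  fun k => (Real.sqrt d : ℂ)⁻¹ * Complex.exp (Complex.I * (θ x k : ℂ))

/-- The family of phases θ defines a conjugate (orthonormal) basis. -/
def IsConjBasis (d : ℕ) (θ : Fin d → Fin d → ℝ) : Prop :=
  ∀ x y : Fin d, (∑ k, star (conjVec d θ x k) * conjVec d θ y k) = if x = y then 1 else 0

/-- Projector P̃ₓ = |x̃⟩⟨x̃|. -/
def conjProj (d : ℕ) (θ : Fin d → Fin d → ℝ) (x : Fin d) : Matrix (Fin d) (Fin d) ℂ :=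
  Matrix.vecMulVec (conjVec d θ x) (star (conjVec d θ x))

/-- The canonical maximally entangled vector |Φ_d⟩. -/
def maxEntVec (d : ℕ) : Fin d × Fin d → ℂ :=
  fun P => if P.1 = P.2 then (Real.sqrt d : ℂ)⁻¹ else 0

/-- Density operator of the canonical maximally entangled state Φ_d. -/
def maxEnt (d : ℕ) : Matrix (Fin d × Fin d) (Fin d × Fin d) ℂ :=
  Matrix.vecMulVec (maxEntVec d) (star (maxEntVec d))

/-- Twisting operator U = ∑ⱼₖ Pⱼ ⊗ Pₖ ⊗ Vⱼₖ. -/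
def IsTwisting {d : ℕ} {σ : Type*} [Fintype σ] [DecidableEq σ]
    (U : Matrix (Fin d × (Fin d × σ)) (Fin d × (Fin d × σ)) ℂ) : Prop :=
  ∃ V : Fin d → Fin d → Matrix σ σ ℂ,
    (∀ j k, V j k ∈ Matrix.unitaryGroup σ ℂ) ∧
    U = ∑ j, ∑ k, stdProj j ⊗ₖ (stdProj k ⊗ₖ V j k)

/-- Exact private state γ = U(Φ_d ⊗ ξ)U†. -/
def IsExactPrivate {d : ℕ} {σ : Type*} [Fintype σ] [DecidableEq σ]
    (γ : Matrix (Fin d × (Fin d × σ)) (Fin d × (Fin d × σ)) ℂ) : Prop :=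
  ∃ (U : Matrix (Fin d × (Fin d × σ)) (Fin d × (Fin d × σ)) ℂ) (ξ : Matrix σ σ ℂ),
    IsTwisting U ∧ IsDensity ξ ∧
    γ = U * (Matrix.reindex (Equiv.prodAssoc (Fin d) (Fin d) σ)
      (Equiv.prodAssoc (Fin d) (Fin d) σ) (maxEnt d ⊗ₖ ξ)) * Uᴴ

/-- ε-secret key: within trace distance 2ε of a perfect secret key state. -/
def IsSecretKey (ε : ℝ) {ι ηE : Type*} [Fintype ι] [DecidableEq ι] [Fintype ηE] [DecidableEq ηE]
    (ρ : Matrix (ι × (ι × ηE)) (ι × (ι × ηE)) ℂ) : Prop :=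
  ∃ ρE : Matrix ηE ηE ℂ, IsDensity ρE ∧
    traceNorm (ρ - (Fintype.card ι : ℂ)⁻¹ • ∑ k, stdProj k ⊗ₖ (stdProj k ⊗ₖ ρE)) ≤ 2 * ε

/-- Standard-basis key measurement on systems A and B. -/
def keyMeasured {ι ηE : Type*} [Fintype ι] [DecidableEq ι] [Fintype ηE] [DecidableEq ηE]
    (ρ : Matrix (ι × (ι × ηE)) (ι × (ι × ηE)) ℂ) : Matrix (ι × (ι × ηE)) (ι × (ι × ηE)) ℂ :=
  ∑ j, ∑ k, (stdProj j ⊗ₖ (stdProj k ⊗ₖ (1 : Matrix ηE ηE ℂ))) * ρ *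
    (stdProj j ⊗ₖ (stdProj k ⊗ₖ (1 : Matrix ηE ηE ℂ)))

/-- ε-private state: some (equivalently, every) purification yields an ε-secret key
upon standard-basis key measurement. -/
def IsEpsPrivate (ε : ℝ) {ι σ : Type*} [Fintype ι] [DecidableEq ι] [Fintype σ] [DecidableEq σ]
    (ψ : Matrix (ι × (ι × σ)) (ι × (ι × σ)) ℂ) : Prop :=
  ∃ (dE : ℕ) (v : ι × (ι × (σ × Fin dE)) → ℂ),
    (∀ P Q : ι × (ι × σ),
      (∑ e, v (P.1, (P.2.1, (P.2.2, e))) * star (v (Q.1, (Q.2.1, (Q.2.2, e))))) = ψ P Q) ∧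
    IsSecretKey ε (keyMeasured (Matrix.of fun P Q : ι × (ι × Fin dE) =>
      ∑ s : σ, v (P.1, (P.2.1, (s, P.2.2))) * star (v (Q.1, (Q.2.1, (s, Q.2.2))))))

/-- ε-private state when the eavesdropper additionally holds a public classical register. -/
def IsEpsPrivateGivenPublic (ε : ℝ) {ι σ μR : Type*}
    [Fintype ι] [DecidableEq ι] [Fintype σ] [DecidableEq σ] [Fintype μR] [DecidableEq μR]
    (ψ : Matrix ((ι × (ι × σ)) × μR) ((ι × (ι × σ)) × μR) ℂ) : Prop :=
  ∃ (dE : ℕ) (v : ((ι × (ι × σ)) × μR) × Fin dE → ℂ),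
    (∀ P Q, (∑ e, v (P, e) * star (v (Q, e))) = ψ P Q) ∧
    IsSecretKey ε (keyMeasured (Matrix.of fun P Q : ι × (ι × (μR × Fin dE)) =>
      ∑ s : σ, v (((P.1, (P.2.1, s)), P.2.2.1), P.2.2.2) *
        star (v (((Q.1, (Q.2.1, s)), Q.2.2.1), Q.2.2.2))))

open Classical in
/-- Von Neumann entropy in bits (via eigenvalues; zero on non-Hermitian input). -/
def vonNeumann {ι : Type*} [Fintype ι] [DecidableEq ι] (ρ : Matrix ι ι ℂ) : ℝ :=
  if h : ρ.IsHermitian then ∑ i, negMulLog2 (h.eigenvalues i) else 0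

/-- Unnormalized conditional state on β given measurement of the vector u on ι. -/
def condStateVec {ι β : Type*} [Fintype ι] (u : ι → ℂ)
    (ρ : Matrix (ι × β) (ι × β) ℂ) : Matrix β β ℂ :=
  Matrix.of fun w w' => ∑ a, ∑ a', star (u a) * ρ (a, w) (a', w') * u a'

/-- Outcome probability of the measurement vector u. -/
def measProb {ι β : Type*} [Fintype ι] [Fintype β] (u : ι → ℂ)
    (ρ : Matrix (ι × β) (ι × β) ℂ) : ℝ := (condStateVec u ρ).trace.re

/-- Holevo quantity of the ensemble induced on β by measuring the basis family W on ι. -/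
def holevoB {ι β κm : Type*} [Fintype ι] [Fintype β] [DecidableEq β] [Fintype κm]
    (W : κm → ι → ℂ) (ρ : Matrix (ι × β) (ι × β) ℂ) : ℝ :=
  vonNeumann (∑ x, condStateVec (W x) ρ) -
    ∑ x, measProb (W x) ρ *
      vonNeumann ((((condStateVec (W x) ρ).trace)⁻¹) • condStateVec (W x) ρ)

open Classical in
/-- Positive-semidefinite square root (zero on non-PSD input). -/
def psqrt {ι : Type*} [Fintype ι] [DecidableEq ι] (M : Matrix ι ι ℂ) : Matrix ι ι ℂ :=
  if h : M.PosSemidef then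
    (h.1.eigenvectorUnitary : Matrix ι ι ℂ) * Matrix.diagonal (((↑) : ℝ → ℂ) ∘ Real.sqrt ∘ h.1.eigenvalues) *
      (star h.1.eigenvectorUnitary : Matrix ι ι ℂ) else 0

/-- n-fold tensor (Kronecker) product of a family of matrices. -/
def tensorPow {dB : ℕ} {n : ℕ} (φ : Fin n → Matrix (Fin dB) (Fin dB) ℂ) :
    Matrix (Fin n → Fin dB) (Fin n → Fin dB) ℂ :=
  Matrix.of fun w w' => ∏ i, φ i (w i) (w' i)

/-- n-fold tensor power of a bipartite state, grouped as (Aⁿ) × (Bⁿ). -/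
def tpow {α β : Type*} (ψ : Matrix (α × β) (α × β) ℂ) (n : ℕ) :
    Matrix ((Fin n → α) × (Fin n → β)) ((Fin n → α) × (Fin n → β)) ℂ :=
  Matrix.of fun P Q => ∏ i, ψ (P.1 i, P.2 i) (Q.1 i, Q.2 i)

/-- Output of a one-way protocol with Alice-instrument Kraus operators E and Bob isometries V;
the classical message is kept in a public register. -/
def protoOut {𝒜 ℬ 𝒜' ℬ' M κI : Type*} [Fintype 𝒜] [Fintype ℬ] [Fintype 𝒜'] [Fintype ℬ']
    [Fintype κI] [DecidableEq M]
    (E : M → κI → Matrix 𝒜' 𝒜 ℂ) (V : M → Matrix ℬ' ℬ ℂ)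
    (ρ : Matrix (𝒜 × ℬ) (𝒜 × ℬ) ℂ) : Matrix ((𝒜' × ℬ') × M) ((𝒜' × ℬ') × M) ℂ :=
  Matrix.of fun P Q =>
    if P.2 = Q.2 then
      (∑ i, ((E P.2 i ⊗ₖ V P.2) * ρ * (E P.2 i ⊗ₖ V P.2)ᴴ)) P.1 Q.1
    else 0

/-- Partial trace over the innermost factor. -/
def ptraceInner {α β γ : Type*} [Fintype γ] (M : Matrix (α × (β × γ)) (α × (β × γ)) ℂ) :
    Matrix (α × β) (α × β) ℂ :=
  Matrix.of fun P Q => ∑ c, M (P.1, (P.2, c)) (Q.1, (Q.2, c))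

/-- Partial trace over the first factor. -/
def ptraceL {α β : Type*} [Fintype α] (M : Matrix (α × β) (α × β) ℂ) : Matrix β β ℂ :=
  Matrix.of fun b b' => ∑ a, M (a, b) (a, b')
/-- Dot product of dit strings. -/
def zdot {d n : ℕ} (x y : Fin n → ZMod d) : ZMod d := ∑ a, x a * y a

/-- Syndrome map defined by a family of stabilizer strings. -/
def synMap {d n m : ℕ} (s : Fin m → (Fin n → ZMod d)) (k : Fin n → ZMod d) : Fin m → ZMod d :=
  fun i => zdot (s i) k

/-- Fourier (conjugate) basis vector |x̃⟩ on n qudits, with ω = e^{2πi/d}. -/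
def fourierVec (d n : ℕ) (x : Fin n → ZMod d) : (Fin n → ZMod d) → ℂ :=
  fun k => (Real.sqrt (d ^ n) : ℂ)⁻¹ *
    Complex.exp (2 * Real.pi * Complex.I / d) ^ (zdot x k).val

/-- Fourier basis projector P̃ₓ. -/
def fourierProj (d n : ℕ) (x : Fin n → ZMod d) :
    Matrix (Fin n → ZMod d) (Fin n → ZMod d) ℂ :=
  Matrix.vecMulVec (fourierVec d n x) (star (fourierVec d n x))

/-- Projector onto the span of standard basis vectors with a given classical label. -/
def classProj {K μ : Type*} [Fintype K] [DecidableEq K] [DecidableEq μ] (f : K → μ) (a : μ) :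
    Matrix K K ℂ := ∑ k, if f k = a then stdProj k else 0

/-- Projector Π̃_β onto the span of Fourier basis vectors with phase syndrome β. -/
def phaseProj (d n mx : ℕ) [NeZero d] (t : Fin mx → (Fin n → ZMod d)) (b : Fin mx → ZMod d) :
    Matrix (Fin n → ZMod d) (Fin n → ZMod d) ℂ :=
  ∑ x, if synMap t x = b then fourierProj d n x else 0

/-- The purification vector ∑ₖ √pₖ |k⟩|φₖ⟩. -/
def purVec {K W : Type*} (p : K → ℝ) (φ : K → W → ℂ) : K × W → ℂ :=
  fun P => (Real.sqrt (p P.1) : ℂ) * φ P.1 P.2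

/-- Reduced state on A ⊗ B of the pure state with amplitudes v on A ⊗ (B ⊗ (S ⊗ E)). -/
def redAB {K : Type*} {dB dS dE : ℕ} (v : K × (Fin dB × (Fin dS × Fin dE)) → ℂ) :
    Matrix (K × Fin dB) (K × Fin dB) ℂ :=
  Matrix.of fun P Q => ∑ sS : Fin dS, ∑ e : Fin dE,
    v (P.1, (P.2, (sS, e))) * star (v (Q.1, (Q.2, (sS, e))))

/-- Reduced state on A ⊗ B ⊗ S of the pure state with amplitudes v on A ⊗ (B ⊗ (S ⊗ E)). -/
def redABS {K : Type*} {dB dS dE : ℕ} (v : K × (Fin dB × (Fin dS × Fin dE)) → ℂ) :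
    Matrix (K × (Fin dB × Fin dS)) (K × (Fin dB × Fin dS)) ℂ :=
  Matrix.of fun P Q => ∑ e : Fin dE,
    v (P.1, (P.2.1, (P.2.2, e))) * star (v (Q.1, (Q.2.1, (Q.2.2, e))))

/-- The post-measurement vector |Ψ₂⟩ = ∑_{α,β,k} (Π_α Π̃_β ⊗ √Λ_{α,k} ⊗ 1)|Ψ⟩|k⟩^{B₂}|α⟩^R|β⟩^T,
with index grouping A × ((B × (S × E)) × (B₂ × (R × T))). -/
def oneShotVec {d n mz mx : ℕ} [NeZero d] {dB dS dE : ℕ}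
    (s : Fin mz → (Fin n → ZMod d)) (t : Fin mx → (Fin n → ZMod d))
    (Λ : (Fin mz → ZMod d) → (Fin n → ZMod d) → Matrix (Fin dB) (Fin dB) ℂ)
    (v : (Fin n → ZMod d) × (Fin dB × (Fin dS × Fin dE)) → ℂ) :
    (Fin n → ZMod d) × ((Fin dB × (Fin dS × Fin dE)) ×
      ((Fin n → ZMod d) × ((Fin mz → ZMod d) × (Fin mx → ZMod d)))) → ℂ :=
  fun P =>
    ∑ a' : Fin n → ZMod d, ∑ b' : Fin dB,
      ((classProj (synMap s) P.2.2.2.1 * phaseProj d n mx t P.2.2.2.2) P.1 a') *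
      (psqrt (Λ P.2.2.2.1 P.2.2.1) P.2.1.1 b') *
      v (a', (b', P.2.1.2))

/-- The ccq state obtained from |Ψ₂⟩ by measuring the logical values λ on A and on B₂
(recording them in registers Ā and B̄), and tracing out A, B, S, B₂ and T.
Eve keeps E and the public register R. -/
def oneShotOut {d n mz mx r : ℕ} [NeZero d] {dB dS dE : ℕ}
    (u : Fin r → (Fin n → ZMod d))
    (Ψ2 : (Fin n → ZMod d) × ((Fin dB × (Fin dS × Fin dE)) ×
      ((Fin n → ZMod d) × ((Fin mz → ZMod d) × (Fin mx → ZMod d)))) → ℂ) :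
    Matrix ((Fin r → ZMod d) × ((Fin r → ZMod d) × (Fin dE × (Fin mz → ZMod d))))
           ((Fin r → ZMod d) × ((Fin r → ZMod d) × (Fin dE × (Fin mz → ZMod d)))) ℂ :=
  Matrix.of fun P Q =>
    if P.1 = Q.1 ∧ P.2.1 = Q.2.1 then
      ∑ a : Fin n → ZMod d, ∑ k2 : Fin n → ZMod d, ∑ b : Fin dB,
        ∑ sS : Fin dS, ∑ βr : Fin mx → ZMod d,
        (if synMap u a = P.1 ∧ synMap u k2 = P.2.1 then
          Ψ2 (a, ((b, (sS, P.2.2.1)), (k2, (P.2.2.2, βr)))) *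
          star (Ψ2 (a, ((b, (sS, Q.2.2.1)), (k2, (Q.2.2.2, βr)))))
        else 0)
    else 0

/-- |Ψ₂⟩ = ∑_{k,ℓ} √pₖ |k⟩(√Λ_ℓ ⊗ 1)|φₖ⟩|ℓ⟩: coherent measurement of the POVM Λ. -/
def coherentMeasVec {N dB dE : ℕ} (p : Fin N → ℝ) (φ : Fin N → (Fin dB × Fin dE) → ℂ)
    (Λ : Fin N → Matrix (Fin dB) (Fin dB) ℂ) : Fin N × ((Fin dB × Fin dE) × Fin N) → ℂ :=
  fun P => (Real.sqrt (p P.1) : ℂ) * ∑ b', psqrt (Λ P.2.2) P.2.1.1 b' * φ P.1 (b', P.2.1.2)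

/-- |Ψ₂'⟩ = ∑ₖ √pₖ |k⟩|φₖ⟩|k⟩: perfect copy of the index k. -/
def copyVec {N dB dE : ℕ} (p : Fin N → ℝ) (φ : Fin N → (Fin dB × Fin dE) → ℂ) :
    Fin N × ((Fin dB × Fin dE) × Fin N) → ℂ :=
  fun P => if P.2.2 = P.1 then (Real.sqrt (p P.1) : ℂ) * φ P.1 P.2.1 else 0


section InfraSpec
open Polynomial

lemma negMulLog2_zero : negMulLog2 0 = 0 := by simp [negMulLog2]

lemma negMulLog2_mul (x y : ℝ) :
    negMulLog2 (x * y) = y * negMulLog2 x + x * negMulLog2 y := by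
  rcases eq_or_ne x 0 with rfl | hx
  · simp [negMulLog2]
  rcases eq_or_ne y 0 with rfl | hy
  · simp [negMulLog2]
  unfold negMulLog2
  rw [Real.logb, Real.logb, Real.logb, Real.log_mul hx hy]
  ring

lemma ms_unique (s₁ s₂ : Multiset ℝ)
    (h : ∀ t : ℂ, t ≠ 0 →
      (s₁.map (fun r : ℝ => t - (r : ℂ))).prod = (s₂.map (fun r : ℝ => t - (r : ℂ))).prod) :
    s₁ = s₂ := by
  set P₁ : ℂ[X] := ((s₁.map (fun r : ℝ => (r : ℂ))).map (fun a => X - C a)).prod with hP₁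
  set P₂ : ℂ[X] := ((s₂.map (fun r : ℝ => (r : ℂ))).map (fun a => X - C a)).prod with hP₂
  have heval : ∀ (s : Multiset ℝ) (t : ℂ),
      (((s.map (fun r : ℝ => (r : ℂ))).map (fun a => X - C a)).prod).eval t
        = (s.map (fun r : ℝ => t - (r : ℂ))).prod := by
    intro s t
    rw [Polynomial.eval_multiset_prod, Multiset.map_map, Multiset.map_map]
    simp
  have hPQ : P₁ = P₂ := by
    have hroot : {t : ℂ | (P₁ - P₂).IsRoot t}.Infinite := by
      apply Set.Infinite.mono (s := {(0 : ℂ)}ᶜ)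
      · intro t ht
        simp only [Set.mem_setOf_eq, IsRoot, eval_sub, hP₁, hP₂, heval]
        rw [h t ht, sub_self]
      · exact Set.Finite.infinite_compl (Set.finite_singleton 0)
    have := Polynomial.eq_zero_of_infinite_isRoot _ hroot
    exact sub_eq_zero.mp this
  have hroots : s₁.map (fun r : ℝ => (r : ℂ)) = s₂.map (fun r : ℝ => (r : ℂ)) := by
    have h1 := Polynomial.roots_multiset_prod_X_sub_C (s₁.map (fun r : ℝ => (r : ℂ)))
    have h2 := Polynomial.roots_multiset_prod_X_sub_C (s₂.map (fun r : ℝ => (r : ℂ)))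
    rw [← h1, ← h2, ← hP₁, ← hP₂, hPQ]
  exact Multiset.map_injective Complex.ofReal_injective hroots

open Classical in
def specs {ι : Type*} [Fintype ι] [DecidableEq ι] (A : Matrix ι ι ℂ) : Multiset ℝ :=
  if h : A.IsHermitian then Finset.univ.val.map h.eigenvalues else 0

lemma specs_def {ι : Type*} [Fintype ι] [DecidableEq ι] {A : Matrix ι ι ℂ}
    (h : A.IsHermitian) : specs A = Finset.univ.val.map h.eigenvalues := by
  rw [specs, dif_pos h]

lemma specs_card {ι : Type*} [Fintype ι] [DecidableEq ι] {A : Matrix ι ι ℂ}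
    (h : A.IsHermitian) : Multiset.card (specs A) = Fintype.card ι := by
  rw [specs_def h, Multiset.card_map]; rfl

lemma det_char {ι : Type*} [Fintype ι] [DecidableEq ι] {A : Matrix ι ι ℂ}
    (hA : A.IsHermitian) (t : ℂ) :
    (t • (1 : Matrix ι ι ℂ) - A).det = ((specs A).map (fun r : ℝ => t - (r : ℂ))).prod := by
  set U : Matrix ι ι ℂ := (Matrix.IsHermitian.eigenvectorUnitary hA : Matrix ι ι ℂ) with hU
  have hUU : U * star U = 1 := (Matrix.mem_unitaryGroup_iff).mp
    (Matrix.IsHermitian.eigenvectorUnitary hA).2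
  have hUU' : star U * U = 1 := (Matrix.mem_unitaryGroup_iff').mp
    (Matrix.IsHermitian.eigenvectorUnitary hA).2
  have key : t • (1 : Matrix ι ι ℂ) - A
      = U * (t • (1 : Matrix ι ι ℂ) - Matrix.diagonal (RCLike.ofReal ∘ hA.eigenvalues)) * star U := by
    rw [Matrix.mul_sub, Matrix.sub_mul]
    congr 1
    · rw [Matrix.mul_smul, Matrix.smul_mul, mul_one, hUU]
    · exact hA.spectral_theorem
  rw [key, Matrix.det_mul, Matrix.det_mul, mul_comm, ← mul_assoc, ← Matrix.det_mul, hUU',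
    Matrix.det_one, one_mul]
  have : t • (1 : Matrix ι ι ℂ) - Matrix.diagonal (RCLike.ofReal ∘ hA.eigenvalues)
      = Matrix.diagonal (fun i => t - (hA.eigenvalues i : ℂ)) := by
    rw [Matrix.smul_one_eq_diagonal, ← Matrix.diagonal_sub]
    rfl
  rw [this, Matrix.det_diagonal, specs_def hA, Multiset.map_map]
  rfl

lemma specs_trace {ι : Type*} [Fintype ι] [DecidableEq ι] {A : Matrix ι ι ℂ}
    (hA : A.IsHermitian) : A.trace = (((specs A).sum : ℝ) : ℂ) := by
  conv_lhs => rw [hA.spectral_theorem]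
  rw [Unitary.conjStarAlgAut_apply, Matrix.trace_mul_cycle,
    (Matrix.mem_unitaryGroup_iff').mp (Matrix.IsHermitian.eigenvectorUnitary hA).2, Matrix.one_mul,
    Matrix.trace_diagonal, specs_def hA]
  have : ((Finset.univ.val.map hA.eigenvalues).sum : ℝ) = ∑ i, hA.eigenvalues i := rfl
  rw [this]
  push_cast
  rfl


lemma specs_gram {ι κ : Type*} [Fintype ι] [DecidableEq ι] [Fintype κ] [DecidableEq κ]
    (N : Matrix ι κ ℂ) :
    specs (Nᴴ * N) + Multiset.replicate (Fintype.card ι) 0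
      = specs (N * Nᴴ) + Multiset.replicate (Fintype.card κ) 0 := by
  apply ms_unique
  intro t ht
  have hpad : ∀ (s : Multiset ℝ) (n : ℕ),
      ((s + Multiset.replicate n 0).map (fun r : ℝ => t - (r : ℂ))).prod
        = (s.map (fun r : ℝ => t - (r : ℂ))).prod * t ^ n := by
    intro s n
    rw [Multiset.map_add, Multiset.prod_add, Multiset.map_replicate]
    simp [Multiset.prod_replicate]
  rw [hpad, hpad, ← det_char (Matrix.posSemidef_conjTranspose_mul_self N).1,
    ← det_char (Matrix.posSemidef_self_mul_conjTranspose N).1]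
  have k1 : t • (1 : Matrix κ κ ℂ) - Nᴴ * N = t • (1 + Nᴴ * ((-t⁻¹) • N)) := by
    rw [smul_add, Matrix.mul_smul, smul_smul, mul_neg, mul_inv_cancel₀ ht]
    simp [sub_eq_add_neg]
  have k2 : t • (1 : Matrix ι ι ℂ) - N * Nᴴ = t • (1 + ((-t⁻¹) • N) * Nᴴ) := by
    rw [smul_add, Matrix.smul_mul, smul_smul, mul_neg, mul_inv_cancel₀ ht]
    simp [sub_eq_add_neg]
  rw [k1, k2, Matrix.det_smul, Matrix.det_smul,
    ← Matrix.det_one_add_mul_comm ((-t⁻¹) • N) Nᴴ]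
  ring

lemma specs_transpose {ι : Type*} [Fintype ι] [DecidableEq ι] (A : Matrix ι ι ℂ) :
    specs Aᵀ = specs A := by
  by_cases hA : A.IsHermitian
  · apply ms_unique
    intro t ht
    rw [← det_char hA t, ← det_char hA.transpose t]
    have : t • (1 : Matrix ι ι ℂ) - Aᵀ = (t • (1 : Matrix ι ι ℂ) - A)ᵀ := by
      rw [Matrix.transpose_sub, Matrix.transpose_smul, Matrix.transpose_one]
    rw [this, Matrix.det_transpose]
  · rw [specs, specs, dif_neg hA,
      dif_neg (fun h => hA (Matrix.isHermitian_transpose_iff.mp h))]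

lemma specs_zero {ι : Type*} [Fintype ι] [DecidableEq ι] :
    specs (0 : Matrix ι ι ℂ) = Multiset.replicate (Fintype.card ι) 0 := by
  apply ms_unique
  intro t ht
  rw [← det_char (Matrix.isHermitian_zero) t]
  rw [sub_zero, Matrix.smul_one_eq_diagonal, Matrix.det_diagonal, Multiset.map_replicate]
  simp [Multiset.prod_replicate, Finset.prod_const, Finset.card_univ]

lemma isHermitian_real_smul {ι : Type*} [Fintype ι] [DecidableEq ι] {A : Matrix ι ι ℂ}
    (hA : A.IsHermitian) (c : ℝ) : (((c : ℝ) : ℂ) • A).IsHermitian := by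
  rw [Matrix.IsHermitian, Matrix.conjTranspose_smul, hA.eq, Complex.star_def,
    Complex.conj_ofReal]

lemma specs_real_smul {ι : Type*} [Fintype ι] [DecidableEq ι] {A : Matrix ι ι ℂ}
    (hA : A.IsHermitian) (c : ℝ) :
    specs (((c : ℝ) : ℂ) • A) = (specs A).map (fun r => c * r) := by
  rcases eq_or_ne c 0 with rfl | hc
  · rw [Complex.ofReal_zero, zero_smul, specs_zero]
    symm
    refine Multiset.eq_replicate.mpr ⟨?_, ?_⟩
    · rw [Multiset.card_map, specs_card hA]
    · intro b hb
      obtain ⟨a, -, rfl⟩ := Multiset.mem_map.mp hb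
      simp
  · have hcC : ((c : ℝ) : ℂ) ≠ 0 := Complex.ofReal_ne_zero.mpr hc
    apply ms_unique
    intro t ht
    rw [← det_char (isHermitian_real_smul hA c) t]
    have key : t • (1 : Matrix ι ι ℂ) - ((c : ℝ) : ℂ) • A
        = ((c : ℝ) : ℂ) • ((((c : ℝ) : ℂ)⁻¹ * t) • (1 : Matrix ι ι ℂ) - A) := by
      rw [smul_sub, smul_smul, ← mul_assoc, mul_inv_cancel₀ hcC, one_mul]
    rw [key, Matrix.det_smul, det_char hA]
    rw [Multiset.map_map]
    have : ((c:ℂ) ^ Fintype.card ι)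
        = ((specs A).map (fun _ : ℝ => ((c : ℝ) : ℂ))).prod := by
      rw [Multiset.map_const', Multiset.prod_replicate, specs_card hA]
    rw [this, ← Multiset.prod_map_mul]
    congr 1
    apply Multiset.map_congr rfl
    intro r hr
    simp only [Function.comp_apply]
    field_simp
    rw [Complex.ofReal_mul]

lemma block_eq_submatrix {ι β : Type*} [Fintype ι] [DecidableEq ι] [Fintype β] [DecidableEq β]
    (A : ι → Matrix β β ℂ) :
    (Matrix.of fun (P Q : ι × β) => if P.1 = Q.1 then A P.1 P.2 Q.2 else 0)
      = (Matrix.blockDiagonal A).submatrix Prod.swap Prod.swap := by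
  ext P Q
  simp only [Matrix.of_apply, Matrix.submatrix_apply, Matrix.blockDiagonal_apply, Prod.swap]

lemma isHermitian_block {ι β : Type*} [Fintype ι] [DecidableEq ι] [Fintype β] [DecidableEq β]
    (A : ι → Matrix β β ℂ) (hA : ∀ c, (A c).IsHermitian) :
    (Matrix.of fun (P Q : ι × β) => if P.1 = Q.1 then A P.1 P.2 Q.2 else 0).IsHermitian := by
  rw [block_eq_submatrix, Matrix.IsHermitian, Matrix.conjTranspose_submatrix,
    Matrix.blockDiagonal_conjTranspose,
    show (fun k => (A k)ᴴ) = A from funext fun c => (hA c).eq]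

lemma specs_block {ι β : Type*} [Fintype ι] [DecidableEq ι] [Fintype β] [DecidableEq β]
    (A : ι → Matrix β β ℂ) (hA : ∀ c, (A c).IsHermitian) :
    specs (Matrix.of fun (P Q : ι × β) => if P.1 = Q.1 then A P.1 P.2 Q.2 else 0)
      = Finset.univ.val.bind (fun c => specs (A c)) := by
  apply ms_unique
  intro t ht
  rw [← det_char (isHermitian_block A hA) t]
  have key : t • (1 : Matrix (ι × β) (ι × β) ℂ)
        - (Matrix.of fun (P Q : ι × β) => if P.1 = Q.1 then A P.1 P.2 Q.2 else 0)
      = (Matrix.blockDiagonal (fun c => t • (1 : Matrix β β ℂ) - A c)).submatrix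
          Prod.swap Prod.swap := by
    ext P Q
    obtain ⟨c, b⟩ := P
    obtain ⟨c', b'⟩ := Q
    simp only [Matrix.sub_apply, Matrix.smul_apply, Matrix.one_apply, Matrix.of_apply,
      Matrix.submatrix_apply, Prod.swap_prod_mk, Matrix.blockDiagonal_apply, Prod.mk.injEq,
      smul_eq_mul]
    rcases eq_or_ne c c' with rfl | h
    · simp [Matrix.one_apply]
    · simp [h, Ne.symm h]
  rw [key]
  have : ((Matrix.blockDiagonal (fun c => t • (1 : Matrix β β ℂ) - A c)).submatrix
      Prod.swap Prod.swap).det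
      = (Matrix.blockDiagonal (fun c => t • (1 : Matrix β β ℂ) - A c)).det := by
    exact Matrix.det_submatrix_equiv_self (Equiv.prodComm ι β) _
  rw [this, Matrix.det_blockDiagonal]
  rw [Multiset.map_bind, Multiset.prod_bind]
  have : ∀ c : ι, (t • (1 : Matrix β β ℂ) - A c).det
      = ((specs (A c)).map (fun r : ℝ => t - (r : ℂ))).prod := fun c => det_char (hA c) t
  simp only [this]
  rfl


lemma vonNeumann_eq_specs {ι : Type*} [Fintype ι] [DecidableEq ι] {A : Matrix ι ι ℂ}
    (hA : A.IsHermitian) : vonNeumann A = ((specs A).map negMulLog2).sum := by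
  classical
  rw [vonNeumann, dif_pos hA, specs_def hA, Multiset.map_map]
  rfl

lemma sum_negMulLog2_pad (s : Multiset ℝ) (n : ℕ) :
    (((s + Multiset.replicate n 0).map negMulLog2)).sum = ((s.map negMulLog2)).sum := by
  rw [Multiset.map_add, Multiset.sum_add, Multiset.map_replicate, negMulLog2_zero]
  simp

lemma vonNeumann_gram {ι κ : Type*} [Fintype ι] [DecidableEq ι] [Fintype κ] [DecidableEq κ]
    (N : Matrix ι κ ℂ) : vonNeumann (Nᴴ * N) = vonNeumann (N * Nᴴ) := by
  rw [vonNeumann_eq_specs (Matrix.posSemidef_conjTranspose_mul_self N).1,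
    vonNeumann_eq_specs (Matrix.posSemidef_self_mul_conjTranspose N).1,
    ← sum_negMulLog2_pad (specs (Nᴴ * N)) (Fintype.card ι),
    ← sum_negMulLog2_pad (specs (N * Nᴴ)) (Fintype.card κ), specs_gram N]

lemma vonNeumann_transpose {ι : Type*} [Fintype ι] [DecidableEq ι] (A : Matrix ι ι ℂ) :
    vonNeumann Aᵀ = vonNeumann A := by
  classical
  by_cases hA : A.IsHermitian
  · rw [vonNeumann_eq_specs hA, vonNeumann_eq_specs hA.transpose, specs_transpose]
  · rw [vonNeumann, vonNeumann, dif_neg hA,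
      dif_neg (fun h => hA (Matrix.isHermitian_transpose_iff.mp h))]

lemma star_exp_I_real (a : ℝ) :
    star (Complex.exp (Complex.I * a)) = Complex.exp (-(Complex.I * a)) := by
  have := Complex.exp_conj (Complex.I * a)
  rw [_root_.map_mul, Complex.conj_I, Complex.conj_ofReal, neg_mul] at this
  exact this.symm

lemma exp_negI_mul_exp (a : ℝ) :
    Complex.exp (-(Complex.I * a)) * Complex.exp (Complex.I * a) = 1 := by
  rw [← Complex.exp_add, neg_add_cancel, Complex.exp_zero]

lemma conjVec_star_mul {d : ℕ} (θ : Fin d → Fin d → ℝ) (x c c' : Fin d) :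
    star (conjVec d θ x c) * conjVec d θ x c'
      = (d : ℂ)⁻¹ * (Complex.exp (-(Complex.I * θ x c)) * Complex.exp (Complex.I * θ x c')) := by
  unfold conjVec
  rw [star_mul', star_exp_I_real, star_inv₀]
  have h1 : star ((Real.sqrt d : ℝ) : ℂ) = ((Real.sqrt d : ℝ) : ℂ) := Complex.conj_ofReal _
  rw [h1]
  have h2 : ((Real.sqrt d : ℝ) : ℂ)⁻¹ * ((Real.sqrt d : ℝ) : ℂ)⁻¹ = (d : ℂ)⁻¹ := by
    rw [← mul_inv]
    congr 1
    rw [← Complex.ofReal_mul, Real.mul_self_sqrt (Nat.cast_nonneg d)]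
    norm_num
  ring_nf
  rw [mul_comm]
  ring_nf
  rw [← h2]
  ring

end InfraSpec


section AuxMain

variable {d dB dS dE : ℕ}

def auxG (φ : Fin d → (Fin dB × (Fin dS × Fin dE)) → ℂ) (c : Fin d) :
    Matrix (Fin dB × Fin dS) (Fin dE) ℂ :=
  Matrix.of fun bs e => φ c (bs.1, (bs.2, e))

def auxTau (φ : Fin d → (Fin dB × (Fin dS × Fin dE)) → ℂ) (c : Fin d) :
    Matrix (Fin dB × Fin dS) (Fin dB × Fin dS) ℂ :=
  auxG φ c * (auxG φ c)ᴴ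

def auxOmega (φ : Fin d → (Fin dB × (Fin dS × Fin dE)) → ℂ) (c : Fin d) :
    Matrix (Fin dE) (Fin dE) ℂ :=
  Matrix.of fun e e' => ∑ b, ∑ sS, φ c (b, (sS, e)) * star (φ c (b, (sS, e')))

def auxN (p : Fin d → ℝ) (φ : Fin d → (Fin dB × (Fin dS × Fin dE)) → ℂ)
    (θ : Fin d → Fin d → ℝ) (x : Fin d) :
    Matrix (Fin dE) (Fin d × (Fin dB × Fin dS)) ℂ :=
  Matrix.of fun e w => (Real.sqrt (p w.1) : ℂ) * Complex.exp (Complex.I * θ x w.1) *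
    star (φ w.1 (w.2.1, (w.2.2, e)))

def rho1 (p : Fin d → ℝ) (φ : Fin d → (Fin dB × (Fin dS × Fin dE)) → ℂ) :
    Matrix (Fin d × (Fin d × (Fin dB × Fin dS))) (Fin d × (Fin d × (Fin dB × Fin dS))) ℂ :=
  Matrix.of fun P Q =>
    if P.2.1 = P.1 ∧ Q.2.1 = Q.1 then
      ((Real.sqrt (p P.1) : ℂ) * (Real.sqrt (p Q.1) : ℂ)) *
        ∑ e, φ P.1 (P.2.2.1, (P.2.2.2, e)) * star (φ Q.1 (Q.2.2.1, (Q.2.2.2, e)))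
    else 0

def rho2 (p : Fin d → ℝ) (φ : Fin d → (Fin dB × (Fin dS × Fin dE)) → ℂ) :
    Matrix (Fin d × Fin dE) (Fin d × Fin dE) ℂ :=
  Matrix.of fun P Q =>
    ∑ c : Fin d, ∑ b : Fin dB, ∑ sS : Fin dS,
      (if c = P.1 then (Real.sqrt (p P.1) : ℂ) * φ P.1 (b, (sS, P.2)) else 0) *
      star (if c = Q.1 then (Real.sqrt (p Q.1) : ℂ) * φ Q.1 (b, (sS, Q.2)) else 0)

variable (p : Fin d → ℝ) (φ : Fin d → (Fin dB × (Fin dS × Fin dE)) → ℂ)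
variable (θ : Fin d → Fin d → ℝ)

lemma aux_tau_herm (c : Fin d) : (auxTau φ c).IsHermitian :=
  Matrix.isHermitian_mul_conjTranspose_self _

lemma sum3_comm {α : Type*} [AddCommMonoid α] (f : Fin dB → Fin dS → Fin dE → α) :
    ∑ e, ∑ b, ∑ s, f b s e = ∑ b, ∑ s, ∑ e, f b s e := by
  rw [Finset.sum_comm]
  exact Finset.sum_congr rfl fun b _ => Finset.sum_comm

lemma star_ofRealC (r : ℝ) : star ((r : ℝ) : ℂ) = ((r : ℝ) : ℂ) := Complex.conj_ofReal r

lemma aux_tau_trace (φ : Fin d → (Fin dB × (Fin dS × Fin dE)) → ℂ)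
    (hφ : ∀ k, ∑ w, Complex.normSq (φ k w) = 1) (c : Fin d) :
    (auxTau φ c).trace = 1 := by
  have h := hφ c
  simp only [Fintype.sum_prod_type] at h
  simp only [auxTau, auxG, Matrix.trace, Matrix.diag, Matrix.mul_apply,
    Matrix.conjTranspose_apply, Matrix.of_apply, Fintype.sum_prod_type,
    Complex.star_def, Complex.mul_conj]
  exact_mod_cast h

lemma aux_omega_trace (φ : Fin d → (Fin dB × (Fin dS × Fin dE)) → ℂ)
    (hφ : ∀ k, ∑ w, Complex.normSq (φ k w) = 1) (c : Fin d) :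
    (auxOmega φ c).trace = 1 := by
  have h := hφ c
  simp only [Fintype.sum_prod_type] at h
  simp only [auxOmega, Matrix.trace, Matrix.diag, Matrix.of_apply,
    Complex.star_def, Complex.mul_conj]
  have h2 : ∑ e : Fin dE, ∑ b : Fin dB, ∑ s : Fin dS, Complex.normSq (φ c (b, (s, e))) = 1 := by
    rw [sum3_comm]; exact h
  exact_mod_cast h2

lemma aux_specs_tau_sum (hφ : ∀ k, ∑ w, Complex.normSq (φ k w) = 1) (c : Fin d) :
    (specs (auxTau φ c)).sum = 1 := by
  have h := specs_trace (aux_tau_herm φ c)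
  rw [aux_tau_trace φ hφ c] at h
  exact_mod_cast h.symm

lemma aux_col (hθ : IsConjBasis d θ) (c c' : Fin d) :
    (∑ x, star (conjVec d θ x c) * conjVec d θ x c') = if c = c' then 1 else 0 := by
  set V : Matrix (Fin d) (Fin d) ℂ := Matrix.of fun k x => conjVec d θ x k with hV
  have h1 : Vᴴ * V = 1 := by
    ext x y
    simp only [Matrix.mul_apply, Matrix.conjTranspose_apply, Matrix.of_apply, hV,
      Matrix.one_apply]
    exact hθ x y
  have h2 : V * Vᴴ = 1 := mul_eq_one_comm.mp h1
  have h3 : (V * Vᴴ) c c' = if c = c' then 1 else 0 := by rw [h2, Matrix.one_apply]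
  calc (∑ x, star (conjVec d θ x c) * conjVec d θ x c')
      = star ((V * Vᴴ) c c') := by
        simp only [Matrix.mul_apply, Matrix.conjTranspose_apply, Matrix.of_apply, hV, star_sum,
          star_mul', star_star]
    _ = if c = c' then 1 else 0 := by
        rw [h3, apply_ite star, star_one, star_zero]

lemma aux_collapse (x : Fin d) (w w' : Fin d × (Fin dB × Fin dS)) :
    condStateVec (conjVec d θ x) (rho1 p φ) w w'
      = (star (conjVec d θ x w.1) * conjVec d θ x w'.1) *
        (((Real.sqrt (p w.1) : ℂ) * (Real.sqrt (p w'.1) : ℂ)) *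
          ∑ e, φ w.1 (w.2.1, (w.2.2, e)) * star (φ w'.1 (w'.2.1, (w'.2.2, e)))) := by
  simp only [condStateVec, Matrix.of_apply, rho1]
  rw [Finset.sum_eq_single w.1]
  rotate_left
  · intro a _ ha
    apply Finset.sum_eq_zero
    intro a' _
    rw [if_neg (fun hc => ha hc.1.symm), mul_zero, zero_mul]
  · intro h; exact absurd (Finset.mem_univ _) h
  rw [Finset.sum_eq_single w'.1]
  rotate_left
  · intro a' _ ha'
    rw [if_neg (fun hc => ha' hc.2.symm), mul_zero, zero_mul]
  · intro h; exact absurd (Finset.mem_univ _) h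
  rw [if_pos ⟨rfl, rfl⟩]
  ring

lemma aux_cond1 (hp0 : ∀ k, 0 ≤ p k) (x : Fin d) :
    condStateVec (conjVec d θ x) (rho1 p φ)
      = (d : ℂ)⁻¹ • ((auxN p φ θ x)ᴴ * auxN p φ θ x) := by
  ext w w'
  rw [aux_collapse]
  simp only [Matrix.smul_apply, Matrix.mul_apply, Matrix.conjTranspose_apply, auxN,
    Matrix.of_apply, smul_eq_mul]
  have hterm : ∀ e : Fin dE,
      star ((Real.sqrt (p w.1) : ℂ) * Complex.exp (Complex.I * θ x w.1) *
          star (φ w.1 (w.2.1, (w.2.2, e)))) *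
        ((Real.sqrt (p w'.1) : ℂ) * Complex.exp (Complex.I * θ x w'.1) *
          star (φ w'.1 (w'.2.1, (w'.2.2, e))))
      = (Complex.exp (-(Complex.I * θ x w.1)) * Complex.exp (Complex.I * θ x w'.1) *
            ((Real.sqrt (p w.1) : ℂ) * (Real.sqrt (p w'.1) : ℂ))) *
          (φ w.1 (w.2.1, (w.2.2, e)) * star (φ w'.1 (w'.2.1, (w'.2.2, e)))) := by
    intro e
    rw [star_mul', star_mul', star_star, star_exp_I_real, star_ofRealC]
    ring
  simp only [hterm]
  rw [← Finset.mul_sum, conjVec_star_mul]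
  ring

lemma aux_N_trace (hp0 : ∀ k, 0 ≤ p k) (hp1 : ∑ k, p k = 1)
    (hφ : ∀ k, ∑ w, Complex.normSq (φ k w) = 1) (x : Fin d) :
    ((auxN p φ θ x)ᴴ * auxN p φ θ x).trace = 1 := by
  simp only [Matrix.trace, Matrix.diag, Matrix.mul_apply, Matrix.conjTranspose_apply,
    auxN, Matrix.of_apply]
  have hterm : ∀ (w : Fin d × (Fin dB × Fin dS)) (e : Fin dE),
      star ((Real.sqrt (p w.1) : ℂ) * Complex.exp (Complex.I * θ x w.1) *
          star (φ w.1 (w.2.1, (w.2.2, e)))) *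
        ((Real.sqrt (p w.1) : ℂ) * Complex.exp (Complex.I * θ x w.1) *
          star (φ w.1 (w.2.1, (w.2.2, e))))
      = ((p w.1 * Complex.normSq (φ w.1 (w.2.1, (w.2.2, e))) : ℝ) : ℂ) := by
    intro w e
    rw [star_mul', star_mul', star_star, star_exp_I_real, star_ofRealC]
    have h1 : (φ w.1 (w.2.1, (w.2.2, e))) * star (φ w.1 (w.2.1, (w.2.2, e)))
        = ((Complex.normSq (φ w.1 (w.2.1, (w.2.2, e))) : ℝ) : ℂ) := by
      rw [Complex.star_def, Complex.mul_conj]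
    have h2 : (Real.sqrt (p w.1) : ℂ) * (Real.sqrt (p w.1) : ℂ) = ((p w.1 : ℝ) : ℂ) := by
      rw [← Complex.ofReal_mul, Real.mul_self_sqrt (hp0 w.1)]
    calc (Real.sqrt (p w.1) : ℂ) * Complex.exp (-(Complex.I * θ x w.1)) *
            (φ w.1 (w.2.1, (w.2.2, e))) *
          ((Real.sqrt (p w.1) : ℂ) * Complex.exp (Complex.I * θ x w.1) *
            star (φ w.1 (w.2.1, (w.2.2, e))))
        = ((Real.sqrt (p w.1) : ℂ) * (Real.sqrt (p w.1) : ℂ)) *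
            (Complex.exp (-(Complex.I * θ x w.1)) * Complex.exp (Complex.I * θ x w.1)) *
            ((φ w.1 (w.2.1, (w.2.2, e))) * star (φ w.1 (w.2.1, (w.2.2, e)))) := by
          ring
      _ = _ := by
          rw [h1, h2, exp_negI_mul_exp, mul_one, ← Complex.ofReal_mul]
  simp only [hterm]
  have key : ∑ w : Fin d × (Fin dB × Fin dS), ∑ e : Fin dE,
      p w.1 * Complex.normSq (φ w.1 (w.2.1, (w.2.2, e))) = 1 := by
    rw [Fintype.sum_prod_type]
    have hc : ∀ c : Fin d, ∑ bs : Fin dB × Fin dS, ∑ e : Fin dE,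
        p c * Complex.normSq (φ c (bs.1, (bs.2, e))) = p c := by
      intro c
      simp only [← Finset.mul_sum]
      rw [Fintype.sum_prod_type]
      have := hφ c
      simp only [Fintype.sum_prod_type] at this
      rw [show (∑ b : Fin dB, ∑ s : Fin dS, ∑ e : Fin dE,
        Complex.normSq (φ c (b, (s, e)))) = 1 from this, mul_one]
    simp only [hc]
    exact hp1
  exact_mod_cast key

lemma aux_R (hθ : IsConjBasis d θ) (hp0 : ∀ k, 0 ≤ p k) :
    (∑ x, condStateVec (conjVec d θ x) (rho1 p φ))
      = Matrix.of fun P Q : Fin d × (Fin dB × Fin dS) =>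
          if P.1 = Q.1 then (((p P.1 : ℝ) : ℂ) • auxTau φ P.1) P.2 Q.2 else 0 := by
  ext w w'
  rw [Matrix.sum_apply]
  simp only [aux_collapse p φ θ]
  rw [← Finset.sum_mul, aux_col θ hθ]
  rcases eq_or_ne w.1 w'.1 with h | h
  · rw [if_pos h, Matrix.of_apply, if_pos h, Matrix.smul_apply, smul_eq_mul]
    have hsq : (Real.sqrt (p w.1) : ℂ) * (Real.sqrt (p w'.1) : ℂ) = ((p w.1 : ℝ) : ℂ) := by
      rw [← h, ← Complex.ofReal_mul, Real.mul_self_sqrt (hp0 w.1)]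
    rw [one_mul, hsq]
    congr 1
    simp only [auxTau, auxG, Matrix.mul_apply, Matrix.conjTranspose_apply, Matrix.of_apply]
    rw [← h]
  · rw [if_neg h, Matrix.of_apply, if_neg h, zero_mul]

lemma aux_C (hp0 : ∀ k, 0 ≤ p k) (k : Fin d) :
    condStateVec (stdVec k) (rho2 p φ) = ((p k : ℝ) : ℂ) • auxOmega φ k := by
  ext e e'
  simp only [condStateVec, Matrix.of_apply, stdVec]
  rw [Finset.sum_eq_single k]
  rotate_left
  · intro a _ ha
    apply Finset.sum_eq_zero
    intro a' _
    rw [if_neg ha, star_zero, zero_mul, zero_mul]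
  · intro h; exact absurd (Finset.mem_univ _) h
  rw [Finset.sum_eq_single k]
  rotate_left
  · intro a' _ ha'
    rw [if_neg ha', mul_zero]
  · intro h; exact absurd (Finset.mem_univ _) h
  rw [if_pos rfl, star_one, one_mul, mul_one]
  simp only [rho2, Matrix.of_apply]
  rw [Finset.sum_eq_single k]
  rotate_left
  · intro c _ hc
    apply Finset.sum_eq_zero; intro b _
    apply Finset.sum_eq_zero; intro sS _
    rw [if_neg hc, zero_mul]
  · intro h; exact absurd (Finset.mem_univ _) h
  simp only [eq_self_iff_true, if_true, Matrix.smul_apply, auxOmega, Matrix.of_apply,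
    smul_eq_mul, Finset.mul_sum]
  refine Finset.sum_congr rfl fun b _ => Finset.sum_congr rfl fun sS _ => ?_
  rw [star_mul', star_ofRealC]
  have hsq : (Real.sqrt (p k) : ℂ) * (Real.sqrt (p k) : ℂ) = ((p k : ℝ) : ℂ) := by
    rw [← Complex.ofReal_mul, Real.mul_self_sqrt (hp0 k)]
  calc (Real.sqrt (p k) : ℂ) * φ k (b, (sS, e)) *
        ((Real.sqrt (p k) : ℂ) * star (φ k (b, (sS, e'))))
      = ((Real.sqrt (p k) : ℂ) * (Real.sqrt (p k) : ℂ)) *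
          (φ k (b, (sS, e)) * star (φ k (b, (sS, e')))) := by ring
    _ = _ := by rw [hsq]

lemma aux_NN (hp0 : ∀ k, 0 ≤ p k) (x : Fin d) :
    auxN p φ θ x * (auxN p φ θ x)ᴴ
      = (∑ k, condStateVec (stdVec k) (rho2 p φ))ᵀ := by
  have hC : ∀ k : Fin d, condStateVec (stdVec k) (rho2 p φ) = ((p k : ℝ) : ℂ) • auxOmega φ k :=
    aux_C p φ hp0
  ext e e'
  simp only [Matrix.transpose_apply, Matrix.sum_apply, hC, Matrix.smul_apply, auxOmega,
    Matrix.of_apply, smul_eq_mul, Matrix.mul_apply, Matrix.conjTranspose_apply, auxN,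
    Fintype.sum_prod_type, Finset.mul_sum]
  refine Finset.sum_congr rfl fun c _ => Finset.sum_congr rfl fun b _ =>
    Finset.sum_congr rfl fun sS _ => ?_
  rw [star_mul', star_mul', star_star, star_exp_I_real, star_ofRealC]
  have hsq : (Real.sqrt (p c) : ℂ) * (Real.sqrt (p c) : ℂ) = ((p c : ℝ) : ℂ) := by
    rw [← Complex.ofReal_mul, Real.mul_self_sqrt (hp0 c)]
  calc (Real.sqrt (p c) : ℂ) * Complex.exp (Complex.I * θ x c) * star (φ c (b, (sS, e))) *
        ((Real.sqrt (p c) : ℂ) * Complex.exp (-(Complex.I * θ x c)) * φ c (b, (sS, e')))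
      = ((Real.sqrt (p c) : ℂ) * (Real.sqrt (p c) : ℂ)) *
          (Complex.exp (-(Complex.I * θ x c)) * Complex.exp (Complex.I * θ x c)) *
          (φ c (b, (sS, e')) * star (φ c (b, (sS, e)))) := by ring
    _ = _ := by rw [hsq, exp_negI_mul_exp, mul_one]

lemma aux_omega_eq (k : Fin d) : auxOmega φ k = ((auxG φ k)ᴴ * auxG φ k)ᵀ := by
  ext e e'
  simp only [auxOmega, Matrix.of_apply, Matrix.transpose_apply, Matrix.mul_apply,
    Matrix.conjTranspose_apply, auxG, Fintype.sum_prod_type]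
  refine Finset.sum_congr rfl fun b _ => Finset.sum_congr rfl fun sS _ => mul_comm _ _


lemma aux_omega_tau (k : Fin d) : vonNeumann (auxOmega φ k) = vonNeumann (auxTau φ k) := by
  have h : auxOmega φ k = ((auxG φ k)ᴴ * auxG φ k)ᵀ := aux_omega_eq φ k
  rw [h, vonNeumann_transpose, vonNeumann_gram]
  rfl

end AuxMain

/-- **Lemma 2.** For |ψ_a⟩ = ∑ₖ √pₖ|k⟩^A|k⟩^C|φₖ⟩^{BSE} and any conjugate basis of A,
I(X̃^A:CBS) = H(Z^A) - I(Z^A:E). -/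
theorem conjugate_holevo_identity
    {d dB dS dE : ℕ} (hd : 0 < d)
    (p : Fin d → ℝ) (hp0 : ∀ k, 0 ≤ p k) (hp1 : ∑ k, p k = 1)
    (φ : Fin d → (Fin dB × (Fin dS × Fin dE)) → ℂ)
    (hφ : ∀ k, ∑ w, Complex.normSq (φ k w) = 1)
    (θ : Fin d → Fin d → ℝ) (hθ : IsConjBasis d θ) :
    holevoB (conjVec d θ)
      (Matrix.of fun P Q : Fin d × (Fin d × (Fin dB × Fin dS)) =>
        if P.2.1 = P.1 ∧ Q.2.1 = Q.1 then
          ((Real.sqrt (p P.1) : ℂ) * (Real.sqrt (p Q.1) : ℂ)) *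
            ∑ e, φ P.1 (P.2.2.1, (P.2.2.2, e)) * star (φ Q.1 (Q.2.2.1, (Q.2.2.2, e)))
        else 0)
    = shannon p -
      holevoB stdVec
        (Matrix.of fun P Q : Fin d × Fin dE =>
          ∑ c : Fin d, ∑ b : Fin dB, ∑ sS : Fin dS,
            (if c = P.1 then (Real.sqrt (p P.1) : ℂ) * φ P.1 (b, (sS, P.2)) else 0) *
            star (if c = Q.1 then (Real.sqrt (p Q.1) : ℂ) * φ Q.1 (b, (sS, Q.2)) else 0)) := by
  
  classical
  have hdC : (d : ℂ) ≠ 0 := Nat.cast_ne_zero.mpr hd.ne'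
  have hdR : (d : ℝ) ≠ 0 := Nat.cast_ne_zero.mpr hd.ne'
  show holevoB (conjVec d θ) (rho1 p φ) = shannon p - holevoB stdVec (rho2 p φ)
  have hblockherm : ∀ c : Fin d, (((p c : ℝ) : ℂ) • auxTau φ c).IsHermitian :=
    fun c => isHermitian_real_smul (aux_tau_herm φ c) (p c)
  -- LHS first term
  have hT1 : vonNeumann (∑ x, condStateVec (conjVec d θ x) (rho1 p φ))
      = shannon p + ∑ c, p c * vonNeumann (auxTau φ c) := by
    rw [aux_R p φ θ hθ hp0, vonNeumann_eq_specs (isHermitian_block _ hblockherm),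
      specs_block _ hblockherm, Multiset.map_bind, Multiset.sum_bind]
    have hper : ∀ c : Fin d, ((specs (((p c : ℝ) : ℂ) • auxTau φ c)).map negMulLog2).sum
        = negMulLog2 (p c) + p c * vonNeumann (auxTau φ c) := by
      intro c
      rw [specs_real_smul (aux_tau_herm φ c) (p c), Multiset.map_map]
      have hcong : ((specs (auxTau φ c)).map (negMulLog2 ∘ fun r => p c * r))
          = (specs (auxTau φ c)).map
              (fun r => r * negMulLog2 (p c) + p c * negMulLog2 r) :=
        Multiset.map_congr rfl (fun r _ => negMulLog2_mul (p c) r)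
      rw [hcong, Multiset.sum_map_add, Multiset.sum_map_mul_right,
        Multiset.sum_map_mul_left]
      have hid : ((specs (auxTau φ c)).map (fun r => r)).sum = 1 := by
        rw [Multiset.map_id']; exact aux_specs_tau_sum φ hφ c
      rw [hid, one_mul, ← vonNeumann_eq_specs (aux_tau_herm φ c)]
    have : ∑ c : Fin d, ((specs (((p c : ℝ) : ℂ) • auxTau φ c)).map negMulLog2).sum
        = ∑ c : Fin d, (negMulLog2 (p c) + p c * vonNeumann (auxTau φ c)) :=
      Finset.sum_congr rfl (fun c _ => hper c)
    calc (Finset.univ.val.map fun c : Fin d =>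
            ((specs (((p c : ℝ) : ℂ) • auxTau φ c)).map negMulLog2).sum).sum
        = ∑ c : Fin d, ((specs (((p c : ℝ) : ℂ) • auxTau φ c)).map negMulLog2).sum := rfl
      _ = ∑ c : Fin d, (negMulLog2 (p c) + p c * vonNeumann (auxTau φ c)) := this
      _ = shannon p + ∑ c, p c * vonNeumann (auxTau φ c) := by
          rw [Finset.sum_add_distrib]; rfl
  -- the common Eve state
  have hVN2 : ∀ x : Fin d, vonNeumann ((auxN p φ θ x)ᴴ * auxN p φ θ x)
      = vonNeumann (∑ k, condStateVec (stdVec k) (rho2 p φ)) := by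
    intro x
    rw [vonNeumann_gram, aux_NN p φ θ hp0 x, vonNeumann_transpose]
  -- LHS second term
  have hT2 : ∀ x : Fin d, measProb (conjVec d θ x) (rho1 p φ) *
        vonNeumann ((condStateVec (conjVec d θ x) (rho1 p φ)).trace⁻¹ •
          condStateVec (conjVec d θ x) (rho1 p φ))
      = (d : ℝ)⁻¹ * vonNeumann (∑ k, condStateVec (stdVec k) (rho2 p φ)) := by
    intro x
    have htr : (condStateVec (conjVec d θ x) (rho1 p φ)).trace = (d : ℂ)⁻¹ := by
      rw [aux_cond1 p φ θ hp0 x, Matrix.trace_smul, aux_N_trace p φ θ hp0 hp1 hφ x, smul_eq_mul,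
        mul_one]
    have hmp : measProb (conjVec d θ x) (rho1 p φ) = (d : ℝ)⁻¹ := by
      rw [measProb, htr]
      rw [show ((d : ℂ))⁻¹ = (((d : ℝ)⁻¹ : ℝ) : ℂ) by push_cast; ring]
      exact Complex.ofReal_re _
    have hnorm : (condStateVec (conjVec d θ x) (rho1 p φ)).trace⁻¹ •
          condStateVec (conjVec d θ x) (rho1 p φ)
        = (auxN p φ θ x)ᴴ * auxN p φ θ x := by
      rw [htr, aux_cond1 p φ θ hp0 x, smul_smul, inv_inv, mul_inv_cancel₀ hdC, one_smul]
    rw [hmp, hnorm, hVN2 x]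
  -- RHS second term
  have hT3 : ∀ k : Fin d, measProb (stdVec k) (rho2 p φ) *
        vonNeumann ((condStateVec (stdVec k) (rho2 p φ)).trace⁻¹ •
          condStateVec (stdVec k) (rho2 p φ))
      = p k * vonNeumann (auxTau φ k) := by
    intro k
    have htr : (condStateVec (stdVec k) (rho2 p φ)).trace = ((p k : ℝ) : ℂ) := by
      rw [aux_C p φ hp0 k, Matrix.trace_smul, aux_omega_trace φ hφ k, smul_eq_mul, mul_one]
    have hmp : measProb (stdVec k) (rho2 p φ) = p k := by
      rw [measProb, htr]; exact Complex.ofReal_re _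
    rw [hmp]
    rcases eq_or_ne (p k) 0 with h0 | h0
    · rw [h0, zero_mul, zero_mul]
    · have hnorm : (condStateVec (stdVec k) (rho2 p φ)).trace⁻¹ •
            condStateVec (stdVec k) (rho2 p φ) = auxOmega φ k := by
        rw [htr, aux_C p φ hp0 k, smul_smul,
          inv_mul_cancel₀ (Complex.ofReal_ne_zero.mpr h0), one_smul]
      rw [hnorm, aux_omega_tau φ k]
  -- assemble
  rw [holevoB, holevoB, hT1]
  rw [Finset.sum_congr rfl (fun x _ => hT2 x), Finset.sum_congr rfl (fun k _ => hT3 k)]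
  rw [Finset.sum_const, Finset.card_univ, Fintype.card_fin, nsmul_eq_mul]
  field_simp
  ring
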